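/- Let p > 3 be prime with |∑_{1 ≤ n < p} λ(n)λ(p−n)| = p − 1. Then S_λ(2ξ) = −S_λ(ξ) for all ξ ∈ ℤ/pℤ, where S_λ(ξ) := ∑_{1 ≤ n < p} λ(n)·exp(2πi·nξ/p). -/

import Mathlib

open Finset

def lam (n : ℕ) : ℤ := (-1) ^ (ArithmeticFunction.cardFactors n)

noncomputable def Slam (p : ℕ) (ξ : ℕ) : ℂ :=
  ∑ n ∈ Finset.Ico 1 p, (lam n : ℂ) * Complex.exp (2 * Real.pi * Complex.I * (n * ξ) / p)

lemma lam_sq (n : ℕ) : lam n * lam n = 1 := by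
  unfold lam
  rw [← pow_add]
  exact Even.neg_one_pow ⟨_, rfl⟩

lemma lam_two_mul (n : ℕ) (hn : n ≠ 0) : lam (2 * n) = - lam n := by
  unfold lam
  rw [ArithmeticFunction.cardFactors_mul two_ne_zero hn,
    ArithmeticFunction.cardFactors_apply_prime Nat.prime_two, pow_add, pow_one, neg_one_mul]

theorem stmt_8 (p : ℕ) (hp : p.Prime) (hp3 : 3 < p)
    (h : |∑ n ∈ Finset.Ico 1 p, lam n * lam (p - n)| = (p : ℤ) - 1) :
    ∀ ξ : ℕ, Slam p (2 * ξ) = -Slam p ξ := by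
  have hpodd : p % 2 = 1 := Nat.odd_iff.mp (hp.odd_of_ne_two (by omega))
  have hcard : ((Finset.Ico 1 p).card : ℤ) = (p : ℤ) - 1 := by
    rw [Nat.card_Ico]; push_cast [Nat.cast_sub (by omega : 1 ≤ p)]; ring
  have ht : ∀ n ∈ Finset.Ico 1 p, lam n * lam (p - n) = 1 ∨ lam n * lam (p - n) = -1 := by
    intro n _
    apply mul_self_eq_one_iff.mp
    rw [mul_mul_mul_comm, lam_sq, lam_sq, mul_one]
  -- the product lam n * lam (p - n) is constant on Ico 1 p
  have hconst : ∀ n ∈ Finset.Ico 1 p, ∀ m ∈ Finset.Ico 1 p,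
      lam n * lam (p - n) = lam m * lam (p - m) := by
    have hpge : (3:ℤ) < (p:ℤ) := by exact_mod_cast hp3
    rcases (abs_eq (by linarith)).mp h with hT | hT
    · have hall : ∀ n ∈ Finset.Ico 1 p, lam n * lam (p - n) = 1 := by
        have hz : ∑ n ∈ Finset.Ico 1 p, (1 - lam n * lam (p - n)) = 0 := by
          rw [Finset.sum_sub_distrib, Finset.sum_const, hT, nsmul_eq_mul, mul_one, hcard]
          ring
        intro n hn
        have := (Finset.sum_eq_zero_iff_of_nonneg ?_).mp hz n hn
        · linarith
        · intro i hi
          rcases ht i hi with h1 | h1 <;> simp [h1]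
      intro n hn m hm; rw [hall n hn, hall m hm]
    · have hall : ∀ n ∈ Finset.Ico 1 p, lam n * lam (p - n) = -1 := by
        have hz : ∑ n ∈ Finset.Ico 1 p, (lam n * lam (p - n) + 1) = 0 := by
          rw [Finset.sum_add_distrib, Finset.sum_const, hT, nsmul_eq_mul, mul_one, hcard]
          ring
        intro n hn
        have := (Finset.sum_eq_zero_iff_of_nonneg ?_).mp hz n hn
        · linarith
        · intro i hi
          rcases ht i hi with h1 | h1 <;> simp [h1]
      intro n hn m hm; rw [hall n hn, hall m hm]
  -- key sign lemma
  have hsign : ∀ n ∈ Finset.Ico 1 p, lam (2 * n % p) = - lam n := by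
    intro n hn
    obtain ⟨hn1, hnp⟩ := Finset.mem_Ico.mp hn
    by_cases h2 : 2 * n < p
    · rw [Nat.mod_eq_of_lt h2, lam_two_mul n (by omega)]
    · have h2n : p < 2 * n := by omega
      have hmod : 2 * n % p = 2 * n - p := by
        rw [Nat.mod_eq_sub_mod (by omega), Nat.mod_eq_of_lt (by omega)]
      rw [hmod]
      have hmem : 2 * n - p ∈ Finset.Ico 1 p := Finset.mem_Ico.mpr ⟨by omega, by omega⟩
      have e1 : lam (p - (2 * n - p)) = - lam (p - n) := by
        have hpn : p - (2 * n - p) = 2 * (p - n) := by omega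
        rw [hpn, lam_two_mul _ (by omega)]
      have e2 := hconst (2 * n - p) hmem n hn
      rw [e1] at e2
      have sq := lam_sq (p - n)
      calc lam (2 * n - p) = lam (2 * n - p) * (lam (p - n) * lam (p - n)) := by
            rw [sq, mul_one]
        _ = -(lam (2 * n - p) * (-lam (p - n)) * lam (p - n)) := by ring
        _ = -(lam n * lam (p - n) * lam (p - n)) := by rw [e2]
        _ = -(lam n * (lam (p - n) * lam (p - n))) := by ring
        _ = - lam n := by rw [sq, mul_one]
  intro ξ
  have hp0 : (p : ℂ) ≠ 0 := Nat.cast_ne_zero.mpr (by omega)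
  unfold Slam
  rw [← Finset.sum_neg_distrib]
  refine Finset.sum_nbij' (fun n => 2 * n % p)
    (fun m => if m % 2 = 0 then m / 2 else (m + p) / 2) ?_ ?_ ?_ ?_ ?_
  · intro n hn
    obtain ⟨hn1, hnp⟩ := Finset.mem_Ico.mp hn
    refine Finset.mem_Ico.mpr ⟨?_, Nat.mod_lt _ (by omega)⟩
    rcases Nat.eq_zero_or_pos (2 * n % p) with h0 | h0
    · exfalso
      have hdvd : p ∣ 2 * n := Nat.dvd_of_mod_eq_zero h0
      rcases (Nat.Prime.dvd_mul hp).mp hdvd with h1 | h1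
      · have := Nat.le_of_dvd (by norm_num) h1; omega
      · have := Nat.le_of_dvd (by omega) h1; omega
    · omega
  · intro m hm
    obtain ⟨hm1, hmp⟩ := Finset.mem_Ico.mp hm
    by_cases he : m % 2 = 0
    · rw [if_pos he]; exact Finset.mem_Ico.mpr ⟨by omega, by omega⟩
    · rw [if_neg he]; exact Finset.mem_Ico.mpr ⟨by omega, by omega⟩
  · intro n hn
    obtain ⟨hn1, hnp⟩ := Finset.mem_Ico.mp hn
    by_cases h2 : 2 * n < p
    · rw [Nat.mod_eq_of_lt h2]
      have : 2 * n % 2 = 0 := by omega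
      rw [if_pos this]; omega
    · have hmod : 2 * n % p = 2 * n - p := by
        rw [Nat.mod_eq_sub_mod (by omega), Nat.mod_eq_of_lt (by omega)]
      rw [hmod]
      have : ¬ (2 * n - p) % 2 = 0 := by omega
      rw [if_neg this]; omega
  · intro m hm
    obtain ⟨hm1, hmp⟩ := Finset.mem_Ico.mp hm
    by_cases he : m % 2 = 0
    · rw [if_pos he]
      have : 2 * (m / 2) = m := by omega
      rw [this, Nat.mod_eq_of_lt hmp]
    · rw [if_neg he]
      have : 2 * ((m + p) / 2) = m + p := by omega
      rw [this, Nat.add_mod_right, Nat.mod_eq_of_lt hmp]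
  · intro n hn
    have hnat : 2 * n = 2 * n % p + p * (2 * n / p) := (Nat.mod_add_div (2 * n) p).symm
    have hc : ((2 * n : ℕ) : ℂ) = ((2 * n % p : ℕ) : ℂ) + (p : ℂ) * ((2 * n / p : ℕ) : ℂ) := by
      exact_mod_cast congrArg (fun x : ℕ => (x : ℂ)) hnat
    have harg : 2 * (Real.pi : ℂ) * Complex.I * ((n : ℂ) * ((2 * ξ : ℕ) : ℂ)) / (p : ℂ)
        = 2 * (Real.pi : ℂ) * Complex.I * (((2 * n % p : ℕ) : ℂ) * (ξ : ℂ)) / (p : ℂ)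
          + ((2 * n / p * ξ : ℕ) : ℂ) * (2 * (Real.pi : ℂ) * Complex.I) := by
      push_cast at hc ⊢
      field_simp
      ring_nf
      ring_nf at hc
      linear_combination (ξ : ℂ) * hc
    rw [harg, Complex.exp_add]
    have h1 : Complex.exp (((2 * n / p * ξ : ℕ) : ℂ) * (2 * (Real.pi : ℂ) * Complex.I)) = 1 := by
      exact_mod_cast Complex.exp_int_mul_two_pi_mul_I ((2 * n / p * ξ : ℕ) : ℤ)
    rw [h1, mul_one]
    have hs : ((lam (2 * n % p) : ℤ) : ℂ) = -((lam n : ℤ) : ℂ) := by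
      exact_mod_cast hsign n hn
    rw [hs]
    ring
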